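/- Let 𝒞 be a locally finitely presentable category and 𝒜 a full subcategory of the finitely presentable objects of 𝒞. Then the canonical functor Ind(𝒜) → 𝒞 induced by the inclusion is fully faithful, its essential image is closed under filtered colimits, and an object C of 𝒞 lies in the closure of 𝒜 under filtered colimits if and only if C is the colimit of some filtered diagram with values in 𝒜. In particular, the closure of 𝒜 under filtered colimits terminates after one step. -/

import Mathlib

open CategoryTheory CategoryTheory.Limits

universe v u

section Aux

variable {D : Type*} [Category D] {E : Type*} [Category E]

/-- If a natural transformation between two functors preserving a colimit is an isomorphism
on the objects of the diagram, then it is an isomorphism at the colimit point. -/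
lemma isIso_app_of_isColimit {Φ Ψ : D ⥤ E} (τ : Φ ⟶ Ψ) {J : Type*} [Category J]
    {K : J ⥤ D} (c : Cocone K) (hc : IsColimit c)
    [PreservesColimit K Φ] [PreservesColimit K Ψ]
    (h : ∀ j, IsIso (τ.app (K.obj j))) : IsIso (τ.app c.pt) := by
  have hΦ := isColimitOfPreserves Φ hc
  have hΨ := isColimitOfPreserves Ψ hc
  haveI : ∀ j, IsIso ((Functor.whiskerLeft K τ).app j) := fun j => h j
  haveI : IsIso (Functor.whiskerLeft K τ) := NatIso.isIso_of_isIso_app _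
  have heq : τ.app c.pt =
      (IsColimit.coconePointsIsoOfNatIso hΦ hΨ (asIso (Functor.whiskerLeft K τ))).hom := by
    refine hΦ.hom_ext fun j => ?_
    rw [IsColimit.comp_coconePointsIsoOfNatIso_hom]
    simpa using (τ.naturality (c.ι.app j)).symm
  rw [heq]
  infer_instance

/-- Dual statement for limits. -/
lemma isIso_app_of_isLimit {Φ Ψ : D ⥤ E} (τ : Φ ⟶ Ψ) {J : Type*} [Category J]
    {K : J ⥤ D} (c : Cone K) (hc : IsLimit c)
    [PreservesLimit K Φ] [PreservesLimit K Ψ]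
    (h : ∀ j, IsIso (τ.app (K.obj j))) : IsIso (τ.app c.pt) := by
  have hΦ := isLimitOfPreserves Φ hc
  have hΨ := isLimitOfPreserves Ψ hc
  haveI : ∀ j, IsIso ((Functor.whiskerLeft K τ).app j) := fun j => h j
  haveI : IsIso (Functor.whiskerLeft K τ) := NatIso.isIso_of_isIso_app _
  have heq : τ.app c.pt =
      (IsLimit.conePointsIsoOfNatIso hΦ hΨ (asIso (Functor.whiskerLeft K τ))).hom := by
    refine hΨ.hom_ext fun j => ?_
    rw [IsLimit.conePointsIsoOfNatIso_hom_comp]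
    simpa using (τ.naturality (c.π.app j)).symm
  rw [heq]
  infer_instance

end Aux

/-- The closure of a class of objects under (small) filtered colimits. -/
inductive FilteredClosure {C : Type u} [Category.{v} C] (P : C → Prop) : C → Prop
  | base : ∀ (X : C), P X → FilteredClosure P X
  | colim : ∀ {J : Type v} [SmallCategory J] [IsFiltered J] (F : J ⥤ C) (c : Cocone F),
      IsColimit c → (∀ j : J, FilteredClosure P (F.obj j)) → FilteredClosure P c.pt

/-- An object is finitely presentable if its covariant hom-functor preserves filtered
colimits. -/
def IsFinitelyPresentable {C : Type u} [Category.{v} C] (X : C) : Prop :=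
  Nonempty (PreservesFilteredColimitsOfSize.{v, v} (coyoneda.obj (Opposite.op X)))

/-- Proposition `ind_objects`: let `𝒞` be a locally finitely presentable category (here:
cocomplete with a strong generator `G` of finitely presentable objects) and `𝒜` a full
subcategory of finitely presentable objects (given by the predicate `P`).  Then the
canonical functor `Ind(𝒜) → 𝒞` (any filtered-colimit preserving functor `L` restricting
to the inclusion along `Ind.yoneda`) is fully faithful, its essential image is the
closure of `𝒜` under filtered colimits, and an object lies in this closure if and only
if it is the colimit of a filtered diagram with values in `𝒜`; in particular the closure
under filtered colimits terminates after one step. -/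
theorem ind_objects {C : Type u} [Category.{v} C] [HasColimitsOfSize.{v, v} C]
    (G : Set C) (hGfp : ∀ X ∈ G, _root_.IsFinitelyPresentable X) (hGgen : ObjectProperty.IsDetecting (fun X => X ∈ G))
    (P : C → Prop) (hP : ∀ X : C, P X → _root_.IsFinitelyPresentable X)
    (L : Ind (ObjectProperty.FullSubcategory P) ⥤ C) [PreservesFilteredColimitsOfSize.{v, v} L]
    (hL : Ind.yoneda ⋙ L ≅ ObjectProperty.ι P) :
    L.Full ∧ L.Faithful ∧
    (∀ X : C, L.essImage X ↔ FilteredClosure P X) ∧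
    (∀ X : C, FilteredClosure P X ↔
      ∃ (J : Type v) (_ : SmallCategory J) (_ : IsFiltered J) (F : J ⥤ C)
        (c : Cocone F), Nonempty (IsColimit c) ∧ Nonempty (c.pt ≅ X) ∧
          ∀ j : J, P (F.obj j)) := by
  -- Objects `Ind.yoneda.obj A₀` are finitely presentable in `Ind (ObjectProperty.FullSubcategory P)`.
  have fpYoneda : ∀ A₀ : ObjectProperty.FullSubcategory P, PreservesFilteredColimitsOfSize.{v, v}
      (coyoneda.obj (Opposite.op (Ind.yoneda.obj A₀))) := by
    intro A₀
    have e : coyoneda.obj (Opposite.op (Ind.yoneda.obj A₀)) ≅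
        Ind.inclusion (ObjectProperty.FullSubcategory P) ⋙
          (evaluation (ObjectProperty.FullSubcategory P)ᵒᵖ (Type v)).obj (Opposite.op A₀) :=
      NatIso.ofComponents
        (fun Y => Equiv.toIso <|
          (Ind.inclusion.fullyFaithful.homEquiv.trans
            (Iso.homCongr (Ind.yonedaCompInclusion.app A₀) (Iso.refl _))).trans yonedaEquiv)
        (fun {Y Y'} f => by
          ext g
          simp [Functor.FullyFaithful.homEquiv, yonedaEquiv_comp])
    exact ⟨fun J _ _ => preservesColimitsOfShape_of_natIso e.symm⟩
  -- The images `L.obj (Ind.yoneda.obj A₀)` are finitely presentable in `C`.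
  have fpL : ∀ A₀ : ObjectProperty.FullSubcategory P, PreservesFilteredColimitsOfSize.{v, v}
      (coyoneda.obj (Opposite.op (L.obj (Ind.yoneda.obj A₀)))) := by
    intro A₀
    obtain ⟨h⟩ := hP A₀.obj A₀.property
    refine ⟨fun J _ _ => ?_⟩
    haveI : PreservesColimitsOfShape J
        (coyoneda.obj (Opposite.op ((ObjectProperty.ι P).obj A₀))) :=
      h.preserves_filtered_colimits J
    exact preservesColimitsOfShape_of_natIso (coyoneda.mapIso (hL.app A₀).op)
  -- `L.map` is bijective on homs between yoneda objects.
  have bij_yy : ∀ A₀ B₀ : ObjectProperty.FullSubcategory P,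
      Function.Bijective fun g : Ind.yoneda.obj A₀ ⟶ Ind.yoneda.obj B₀ => L.map g := by
    intro A₀ B₀
    have hy : Function.Bijective fun f : A₀ ⟶ B₀ => Ind.yoneda.map f :=
      Ind.yoneda.fullyFaithful.homEquiv.bijective
    have hcomp : (fun f : A₀ ⟶ B₀ => L.map (Ind.yoneda.map f)) =
        fun f => hL.hom.app A₀ ≫ (ObjectProperty.ι P).map f ≫ hL.inv.app B₀ := by
      funext f
      rw [← NatTrans.naturality_assoc]
      simp
    have h2 : Function.Bijective fun f : A₀ ⟶ B₀ => L.map (Ind.yoneda.map f) := by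
      rw [hcomp]
      exact (((Functor.FullyFaithful.ofFullyFaithful (ObjectProperty.ι P)).homEquiv).trans
        (Iso.homCongr (asIso (hL.hom.app A₀)).symm (asIso (hL.inv.app B₀)))).bijective
    exact (Function.Bijective.of_comp_iff _ hy).mp h2
  -- `L.map` is bijective on homs from yoneda objects.
  have bij_yX : ∀ (A₀ : ObjectProperty.FullSubcategory P) (Y : Ind (ObjectProperty.FullSubcategory P)),
      Function.Bijective fun g : Ind.yoneda.obj A₀ ⟶ Y => L.map g := by
    intro A₀ Y
    let τ : coyoneda.obj (Opposite.op (Ind.yoneda.obj A₀)) ⟶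
        L ⋙ coyoneda.obj (Opposite.op (L.obj (Ind.yoneda.obj A₀))) :=
      { app := fun Z => TypeCat.ofHom (fun g => L.map g)
        naturality := fun Z Z' f => by ext g; exact L.map_comp g f }
    suffices h : IsIso (τ.app Y) from (isIso_iff_bijective (τ.app Y)).mp h
    haveI := fpYoneda A₀
    haveI := fpL A₀
    have hiso : ∀ j : Y.presentation.I,
        IsIso (τ.app ((Y.presentation.F ⋙ Ind.yoneda).obj j)) :=
      fun j => (isIso_iff_bijective _).mpr (bij_yy A₀ _)
    exact isIso_app_of_isColimit τ _
      (IsColimit.extendIso (Ind.colimitPresentationCompYoneda Y).hom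
        (colimit.isColimit (Y.presentation.F ⋙ Ind.yoneda))) hiso
  -- `L.map` is bijective on all hom-sets.
  have bij : ∀ X Y : Ind (ObjectProperty.FullSubcategory P),
      Function.Bijective fun g : X ⟶ Y => L.map g := by
    intro X Y
    let σ : yoneda.obj Y ⟶ L.op ⋙ yoneda.obj (L.obj Y) :=
      { app := fun Z => TypeCat.ofHom (fun g => L.map g)
        naturality := fun Z Z' f => by ext g; exact L.map_comp f.unop g }
    suffices h : IsIso (σ.app (Opposite.op X)) from
      (isIso_iff_bijective (σ.app (Opposite.op X))).mp h
    let K := X.presentation.F ⋙ Ind.yoneda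
    let c : Cocone K := (colimit.cocone K).extend (Ind.colimitPresentationCompYoneda X).hom
    have hc : IsColimit c := IsColimit.extendIso _ (colimit.isColimit K)
    haveI : PreservesColimitsOfShape (X.presentation.Iᵒᵖᵒᵖ) L :=
      preservesColimitsOfShape_of_equiv (opOpEquivalence X.presentation.I).symm L
    haveI : PreservesLimit K.op L.op := preservesLimit_op _ _
    have hiso : ∀ j, IsIso (σ.app (K.op.obj j)) :=
      fun j => (isIso_iff_bijective _).mpr (bij_yX (X.presentation.F.obj j.unop) Y)
    exact isIso_app_of_isLimit σ c.op hc.op hiso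
  have hfull : L.Full := ⟨fun {X Y} => (bij X Y).2⟩
  have hfaithful : L.Faithful := ⟨fun {X Y} _ _ h => (bij X Y).1 h⟩
  -- From the essential image to filtered-colimit presentations.
  have essImage_to_pres : ∀ X : C, L.essImage X →
      ∃ (J : Type v) (_ : SmallCategory J) (_ : IsFiltered J) (F : J ⥤ C)
        (c : Cocone F), Nonempty (IsColimit c) ∧ Nonempty (c.pt ≅ X) ∧
          ∀ j : J, P (F.obj j) := by
    intro X hX
    obtain ⟨Z, ⟨eZ⟩⟩ := hX
    let pres := Z.presentation
    let Kc := pres.F ⋙ Ind.yoneda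
    refine ⟨pres.I, inferInstance, inferInstance, pres.F ⋙ ObjectProperty.ι P,
      colimit.cocone _, ⟨colimit.isColimit _⟩, ⟨?_⟩, fun j => (pres.F.obj j).property⟩
    haveI : HasColimit (Kc ⋙ L) := ⟨⟨⟨_, isColimitOfPreserves L (colimit.isColimit Kc)⟩⟩⟩
    calc colimit (pres.F ⋙ ObjectProperty.ι P)
        ≅ colimit (Kc ⋙ L) := (HasColimit.isoOfNatIso
          (Functor.associator pres.F Ind.yoneda L ≪≫ Functor.isoWhiskerLeft pres.F hL)).symm
      _ ≅ L.obj (colimit Kc) := (preservesColimitIso L Kc).symm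
      _ ≅ L.obj Z := L.mapIso (Ind.colimitPresentationCompYoneda Z)
      _ ≅ X := eZ
  -- From filtered-colimit presentations to the filtered closure.
  have pres_to_closure : ∀ X : C,
      (∃ (J : Type v) (_ : SmallCategory J) (_ : IsFiltered J) (F : J ⥤ C)
        (c : Cocone F), Nonempty (IsColimit c) ∧ Nonempty (c.pt ≅ X) ∧
          ∀ j : J, P (F.obj j)) → FilteredClosure P X := by
    intro X hpres
    obtain ⟨J, _, _, F, c, ⟨hc⟩, ⟨e⟩, hPF⟩ := hpres
    exact FilteredClosure.colim F (c.extend e.hom) (IsColimit.extendIso e.hom hc)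
      (fun j => .base _ (hPF j))
  -- From the filtered closure to the essential image.
  have closure_to_essImage : ∀ X : C, FilteredClosure P X → L.essImage X := by
    intro X hX
    induction hX with
    | base Y hY => exact ⟨Ind.yoneda.obj ⟨Y, hY⟩, ⟨hL.app ⟨Y, hY⟩⟩⟩
    | @colim J _ _ F c hc hF ih =>
      haveI := hfull
      haveI := hfaithful
      haveI : L.toEssImage.IsEquivalence := { }
      let E := L.toEssImage.asEquivalence
      let F₁ : J ⥤ L.EssImageSubcategory := ObjectProperty.lift _ F ih
      let F' : J ⥤ Ind (ObjectProperty.FullSubcategory P) := F₁ ⋙ E.inverse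
      have ν : E.inverse ⋙ L ≅ L.essImage.ι :=
        Functor.isoWhiskerLeft E.inverse L.toEssImageCompι.symm ≪≫
          (Functor.associator _ _ _).symm ≪≫
          Functor.isoWhiskerRight E.counitIso L.essImage.ι ≪≫ Functor.leftUnitor _
      have eF : F' ⋙ L ≅ F :=
        Functor.associator F₁ E.inverse L ≪≫ Functor.isoWhiskerLeft F₁ ν ≪≫
          ObjectProperty.liftCompιIso _ F ih
      refine ⟨colimit F', ⟨?_⟩⟩
      calc L.obj (colimit F')
          ≅ colimit (F' ⋙ L) := preservesColimitIso L F'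
        _ ≅ colimit F := HasColimit.isoOfNatIso eF
        _ ≅ c.pt := (colimit.isColimit F).coconePointUniqueUpToIso hc
  exact ⟨hfull, hfaithful,
    fun X => ⟨fun h => pres_to_closure X (essImage_to_pres X h), closure_to_essImage X⟩,
    fun X => ⟨fun h => essImage_to_pres X (closure_to_essImage X h), pres_to_closure X⟩⟩
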